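/- arXiv:1305.5528 — 4 statements merged into one kernel-verified Lean document; each statement's English description precedes it below -/
import Mathlib

section
/- Let P_q ∈ (0,1] for q = 1,…,d with P_q monotonically non-decreasing in q, and define V_d by V_1 = (1−P_1)/P_1² and V_d = 2 V_{d−1}/P_d + 4^{d−1}(1−P_d)/(P_d² ⋯ P_1²). Then V_d ≤ (2^{2d−1}(1−P_1)/(P_d² ⋯ P_1²))·(1 + (P_d ⋯ P_1)/(2^d P_1)). -/
open Finset

/-- variance recursion bound for the composed gearbox circuit.
With P_q ∈ (0,1] non-decreasing, V_1 = (1−P_1)/P_1², and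
V_d = 2V_{d−1}/P_d + 4^{d−1}(1−P_d)/(P_d²⋯P_1²), we have
V_d ≤ (2^{2d−1}(1−P_1)/(P_d²⋯P_1²))·(1 + (P_d⋯P_1)/(2^d P_1)). -/
theorem composed_gearbox_variance_bound (P V : ℕ → ℝ)
    (hP0 : ∀ q : ℕ, 0 < P q) (hP1 : ∀ q : ℕ, P q ≤ 1) (hPmono : Monotone P)
    (hV1 : V 1 = (1 - P 1) / (P 1) ^ 2)
    (hVrec : ∀ d : ℕ, 2 ≤ d →
      V d = 2 * V (d - 1) / P d
        + 4 ^ (d - 1) * (1 - P d) / ∏ q ∈ Finset.Icc 1 d, (P q) ^ 2) :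
    ∀ d : ℕ, 1 ≤ d →
      V d ≤ (2 ^ (2 * d - 1) * (1 - P 1) / ∏ q ∈ Finset.Icc 1 d, (P q) ^ 2) *
        (1 + (∏ q ∈ Finset.Icc 1 d, P q) / (2 ^ d * P 1)) := by
  intro d hd
  induction d, hd using Nat.le_induction with
  | base =>
    have hx : 0 < P 1 := hP0 1
    have hx1 : P 1 ≤ 1 := hP1 1
    simp only [Finset.Icc_self, Finset.prod_singleton]
    rw [hV1]
    have hA : (0:ℝ) ≤ (1 - P 1) / (P 1) ^ 2 :=
      div_nonneg (by linarith) (by positivity)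
    norm_num
    have h2 : (1:ℝ) + P 1 / (2 * P 1) = 3 / 2 := by
      field_simp
      ring
    rw [h2]
    have h3 : 2 * (1 - P 1) / P 1 ^ 2 * (3 / 2) = 3 * ((1 - P 1) / P 1 ^ 2) := by
      ring
    rw [h3]
    linarith
  | succ d hd ih =>
    have hx : 0 < P 1 := hP0 1
    have hxn : 0 < P (d + 1) := hP0 (d + 1)
    have hxn1 : P (d + 1) ≤ 1 := hP1 (d + 1)
    have hp : 0 < ∏ q ∈ Finset.Icc 1 d, P q :=
      Finset.prod_pos (fun q _ => hP0 q)
    have hmon : P 1 ≤ P (d + 1) := hPmono (by omega)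
    have hsplit : ∀ f : ℕ → ℝ,
        ∏ q ∈ Finset.Icc 1 (d + 1), f q
          = (∏ q ∈ Finset.Icc 1 d, f q) * f (d + 1) := by
      intro f
      rw [Finset.prod_Icc_succ_top (by omega)]
    have hsq : ∀ m : ℕ, ∏ q ∈ Finset.Icc 1 m, (P q) ^ 2
        = (∏ q ∈ Finset.Icc 1 m, P q) ^ 2 := fun m => by
      rw [Finset.prod_pow]
    have hrec := hVrec (d + 1) (by omega)
    simp only [Nat.add_sub_cancel] at hrec
    rw [hsq] at ih
    rw [hrec]
    simp only [hsq, hsplit P]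
    set p := ∏ q ∈ Finset.Icc 1 d, P q with hpdef
    set x := P 1 with hxdef
    set Q := P (d + 1) with hQdef
    -- abbreviations
    have hpQ : (0:ℝ) < p * Q := by positivity
    have hB : V d ≤ (2 ^ (2 * d - 1) * (1 - x) / p ^ 2) * (1 + p / (2 ^ d * x)) := ih
    have h4 : (4:ℝ) ^ d = 2 * 2 ^ (2 * d - 1) := by
      obtain ⟨m, rfl⟩ : ∃ m, d = m + 1 := ⟨d - 1, by omega⟩
      have : 2 * (m + 1) - 1 = 2 * m + 1 := by omega
      rw [this]
      rw [show (4:ℝ) = 2 ^ 2 by norm_num, ← pow_mul]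
      ring_nf
    have h2d1 : (2:ℝ) ^ (2 * (d + 1) - 1) = 4 * 2 ^ (2 * d - 1) := by
      obtain ⟨m, rfl⟩ : ∃ m, d = m + 1 := ⟨d - 1, by omega⟩
      have e1 : 2 * (m + 1 + 1) - 1 = (2 * m + 1) + 2 := by omega
      have e2 : 2 * (m + 1) - 1 = 2 * m + 1 := by omega
      rw [e1, e2, pow_add]
      ring
    -- Step 1: bound V (d+1) by substituting ih and monotonicity
    have step1 : 2 * V d / Q + 4 ^ d * (1 - Q) / (p * Q) ^ 2
        ≤ 2 * ((2 ^ (2 * d - 1) * (1 - x) / p ^ 2) * (1 + p / (2 ^ d * x))) / Q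
          + 4 ^ d * (1 - x) / (p * Q) ^ 2 := by
      gcongr
    -- Step 2: algebra
    have key : 2 * ((2 ^ (2 * d - 1) * (1 - x) / p ^ 2) * (1 + p / (2 ^ d * x))) / Q
          + 4 ^ d * (1 - x) / (p * Q) ^ 2
        = (2 * 2 ^ (2 * d - 1) * (1 - x) / (p * Q) ^ 2)
            * (Q * (1 + p / (2 ^ d * x)) + 1) := by
      rw [h4]
      field_simp
    have keyR : (2 ^ (2 * (d + 1) - 1) * (1 - x) / (p * Q) ^ 2) *
          (1 + p * Q / (2 ^ (d + 1) * x))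
        = (2 * 2 ^ (2 * d - 1) * (1 - x) / (p * Q) ^ 2)
            * (2 * (1 + p * Q / (2 ^ (d + 1) * x))) := by
      rw [h2d1]
      ring
    have hbr : Q * (1 + p / (2 ^ d * x)) + 1
        ≤ 2 * (1 + p * Q / (2 ^ (d + 1) * x)) := by
      have hpow : (2:ℝ) ^ (d + 1) = 2 * 2 ^ d := by rw [pow_succ]; ring
      have heq : 2 * (1 + p * Q / (2 ^ (d + 1) * x))
          - (Q * (1 + p / (2 ^ d * x)) + 1) = 1 - Q := by
        rw [hpow]
        field_simp
        ring
      linarith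
    have ha : (0:ℝ) ≤ 2 * 2 ^ (2 * d - 1) * (1 - x) / (p * Q) ^ 2 := by
      have : (0:ℝ) ≤ 1 - x := by linarith [hP1 1]
      positivity
    calc 2 * V d / Q + 4 ^ d * (1 - Q) / (p * Q) ^ 2 ≤ _ := step1
      _ = (2 * 2 ^ (2 * d - 1) * (1 - x) / (p * Q) ^ 2)
            * (Q * (1 + p / (2 ^ d * x)) + 1) := key
      _ ≤ (2 * 2 ^ (2 * d - 1) * (1 - x) / (p * Q) ^ 2)
            * (2 * (1 + p * Q / (2 ^ (d + 1) * x))) :=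
        mul_le_mul_of_nonneg_left hbr ha
      _ = _ := keyR.symm
end

section
/- For 0 < θ₀ ≤ π/8, writing t = tan θ₀ and P_q = sin⁴(φ_q) + cos⁴(φ_q) with φ_q = arctan(t^{2^{q−1}}), the product satisfies 1/(P_1 ⋯ P_d) ≤ exp(4t²/(1−t²)) < 5/2 for all d ≥ 1. -/
open Finset

set_option maxHeartbeats 1000000 in
/-- for 0 < θ₀ ≤ π/8 and t = tan θ₀, with
P_q = sin⁴φ_q + cos⁴φ_q, φ_q = arctan(t^{2^{q−1}}), we have
1/(P_1⋯P_d) ≤ exp(4t²/(1−t²)) < 5/2 for all d ≥ 1. -/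
theorem composed_gearbox_product_bound (θ₀ : ℝ) (h0 : 0 < θ₀) (h1 : θ₀ ≤ Real.pi / 8)
    (d : ℕ) (hd : 1 ≤ d) :
    (1 / ∏ q ∈ Finset.Icc 1 d,
        (Real.sin (Real.arctan (Real.tan θ₀ ^ (2 ^ (q - 1)))) ^ 4 +
         Real.cos (Real.arctan (Real.tan θ₀ ^ (2 ^ (q - 1)))) ^ 4)
      ≤ Real.exp (4 * Real.tan θ₀ ^ 2 / (1 - Real.tan θ₀ ^ 2))) ∧
    Real.exp (4 * Real.tan θ₀ ^ 2 / (1 - Real.tan θ₀ ^ 2)) < 5 / 2 := by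
  have hpi : (3:ℝ) < Real.pi := Real.pi_gt_three
  set t := Real.tan θ₀ with ht
  have hθlt : θ₀ < Real.pi / 4 := by linarith
  have ht0 : 0 < t := Real.tan_pos_of_pos_of_lt_pi_div_two h0 (by linarith)
  have ht1 : t < 1 := by
    have := Real.tan_lt_tan_of_nonneg_of_lt_pi_div_two h0.le (by linarith) hθlt
    rwa [Real.tan_pi_div_four] at this
  have h1t2 : 0 < 1 - t ^ 2 := by nlinarith
  have htan2 : Real.tan (2 * θ₀) ≤ 1 := by
    rcases lt_or_eq_of_le (by linarith : 2 * θ₀ ≤ Real.pi / 4) with h | h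
    · have := Real.tan_lt_tan_of_nonneg_of_lt_pi_div_two (by linarith) (by linarith) h
      rw [Real.tan_pi_div_four] at this; linarith
    · rw [h, Real.tan_pi_div_four]
  rw [Real.tan_two_mul, div_le_one h1t2] at htan2
  -- t² ≤ 5/29
  have hsq2 : Real.sqrt 2 ^ 2 = 2 := Real.sq_sqrt (by norm_num)
  have ht8 : t ≤ Real.sqrt 2 - 1 := by nlinarith [Real.sqrt_nonneg 2]
  have ht2 : t ^ 2 ≤ 5 / 29 := by nlinarith [Real.sqrt_nonneg 2]
  -- per-term bound
  have key : ∀ q ∈ Finset.Icc 1 d,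
      Real.exp (-(4 * t ^ (2 ^ q))) ≤
        Real.sin (Real.arctan (t ^ (2 ^ (q - 1)))) ^ 4 +
        Real.cos (Real.arctan (t ^ (2 ^ (q - 1)))) ^ 4 := by
    intro q hq
    simp only [Finset.mem_Icc] at hq
    set s : ℝ := t ^ (2 ^ (q - 1)) with hs
    have hseq : s ^ 2 = t ^ (2 ^ q) := by
      have hq1 : 2 ^ (q - 1) * 2 = 2 ^ q := by
        rw [← pow_succ]; congr 1; omega
      rw [hs, ← pow_mul, hq1]
    have h1s : (0:ℝ) < 1 + s ^ 2 := by positivity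
    have hcos2 : Real.cos (Real.arctan s) ^ 2 = 1 / (1 + s ^ 2) :=
      Real.cos_sq_arctan s
    have hsin2 : Real.sin (Real.arctan s) ^ 2 = s ^ 2 / (1 + s ^ 2) := by
      rw [Real.sin_arctan, div_pow, Real.sq_sqrt h1s.le]
    have hxle : s ^ 2 ≤ t ^ 2 := by
      rw [hseq]
      apply pow_le_pow_of_le_one ht0.le ht1.le
      calc 2 ≤ 2 ^ 1 := by norm_num
      _ ≤ 2 ^ q := Nat.pow_le_pow_right (by norm_num) hq.1
    have hx14 : s ^ 2 ≤ 5 / 29 := le_trans hxle ht2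
    have hP : 1 - 2 * s ^ 2 ≤
        Real.sin (Real.arctan s) ^ 4 + Real.cos (Real.arctan s) ^ 4 := by
      have e1 : Real.sin (Real.arctan s) ^ 4 = (s ^ 2 / (1 + s ^ 2)) ^ 2 := by
        rw [← hsin2]; ring
      have e2 : Real.cos (Real.arctan s) ^ 4 = (1 / (1 + s ^ 2)) ^ 2 := by
        rw [← hcos2]; ring
      rw [e1, e2, div_pow, div_pow, ← add_div, one_pow, le_div_iff₀ (by positivity)]
      nlinarith [sq_nonneg s, sq_nonneg (s ^ 2), pow_nonneg (sq_nonneg s) 3]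
    have hexp : Real.exp (-(4 * s ^ 2)) ≤ 1 - 2 * s ^ 2 := by
      have hadd := Real.add_one_le_exp (4 * s ^ 2)
      have hpos := Real.exp_pos (4 * s ^ 2)
      rw [Real.exp_neg, inv_eq_one_div, div_le_iff₀ hpos]
      nlinarith [sq_nonneg s]
    rw [← hseq]
    exact le_trans hexp hP
  -- positivity of product
  have hpos : ∀ q ∈ Finset.Icc 1 d,
      0 < Real.sin (Real.arctan (t ^ (2 ^ (q - 1)))) ^ 4 +
        Real.cos (Real.arctan (t ^ (2 ^ (q - 1)))) ^ 4 :=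
    fun q hq => lt_of_lt_of_le (Real.exp_pos _) (key q hq)
  have hprodpos : 0 < ∏ q ∈ Finset.Icc 1 d,
      (Real.sin (Real.arctan (t ^ (2 ^ (q - 1)))) ^ 4 +
       Real.cos (Real.arctan (t ^ (2 ^ (q - 1)))) ^ 4) :=
    Finset.prod_pos hpos
  -- sum bound
  have hsum : ∑ q ∈ Finset.Icc 1 d, 4 * t ^ (2 ^ q) ≤ 4 * t ^ 2 / (1 - t ^ 2) := by
    have step1 : ∀ q ∈ Finset.Icc 1 d, t ^ (2 ^ q) ≤ (t ^ 2) ^ q := by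
      intro q hq
      simp only [Finset.mem_Icc] at hq
      rw [← pow_mul]
      apply pow_le_pow_of_le_one ht0.le ht1.le
      have h2q : q ≤ 2 ^ (q - 1) := by
        have := Nat.lt_two_pow_self (n := q - 1)
        omega
      calc 2 * q ≤ 2 * 2 ^ (q - 1) := by omega
      _ = 2 ^ (q - 1 + 1) := by rw [pow_succ]; ring
      _ = 2 ^ q := by congr 1; omega
    have step2 : ∑ q ∈ Finset.Icc 1 d, (t ^ 2) ^ q ≤ t ^ 2 / (1 - t ^ 2) := by
      rw [← Finset.Ico_add_one_right_eq_Icc, Finset.sum_Ico_eq_sum_range]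
      have heq : ∀ i, (t ^ 2) ^ (1 + i) = t ^ 2 * (t ^ 2) ^ i := by
        intro i; rw [pow_add, pow_one]
      rw [Finset.sum_congr rfl fun i _ => heq i, ← Finset.mul_sum, div_eq_mul_inv]
      apply mul_le_mul_of_nonneg_left _ (sq_nonneg t)
      rw [geom_sum_eq (by nlinarith : t ^ 2 ≠ 1), ← neg_div_neg_eq]
      have hrw : -((t ^ 2) ^ d - 1) = 1 - (t ^ 2) ^ d := by ring
      have hrw2 : -(t ^ 2 - 1) = 1 - t ^ 2 := by ring
      simp only [Nat.add_sub_cancel]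
      rw [hrw, hrw2, inv_eq_one_div]
      gcongr
      nlinarith [pow_nonneg (sq_nonneg t) d]
    calc ∑ q ∈ Finset.Icc 1 d, 4 * t ^ (2 ^ q)
        ≤ ∑ q ∈ Finset.Icc 1 d, 4 * (t ^ 2) ^ q := by
          apply Finset.sum_le_sum
          intro q hq
          linarith [step1 q hq]
      _ = 4 * ∑ q ∈ Finset.Icc 1 d, (t ^ 2) ^ q := by rw [Finset.mul_sum]
      _ ≤ 4 * (t ^ 2 / (1 - t ^ 2)) := by linarith [step2]
      _ = 4 * t ^ 2 / (1 - t ^ 2) := by ring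
  -- product lower bound
  have hlower : Real.exp (-(4 * t ^ 2 / (1 - t ^ 2))) ≤ ∏ q ∈ Finset.Icc 1 d,
      (Real.sin (Real.arctan (t ^ (2 ^ (q - 1)))) ^ 4 +
       Real.cos (Real.arctan (t ^ (2 ^ (q - 1)))) ^ 4) := by
    calc Real.exp (-(4 * t ^ 2 / (1 - t ^ 2)))
        ≤ Real.exp (∑ q ∈ Finset.Icc 1 d, -(4 * t ^ (2 ^ q))) := by
          apply Real.exp_le_exp.mpr
          rw [Finset.sum_neg_distrib]
          linarith [hsum]
      _ = ∏ q ∈ Finset.Icc 1 d, Real.exp (-(4 * t ^ (2 ^ q))) := Real.exp_sum _ _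
      _ ≤ _ := Finset.prod_le_prod (fun q _ => (Real.exp_pos _).le) key
  constructor
  · rw [div_le_iff₀ hprodpos]
    calc (1:ℝ) = Real.exp (4 * t ^ 2 / (1 - t ^ 2)) *
          Real.exp (-(4 * t ^ 2 / (1 - t ^ 2))) := by
          rw [← Real.exp_add, add_neg_cancel, Real.exp_zero]
      _ ≤ _ := by
          apply mul_le_mul_of_nonneg_left hlower (Real.exp_pos _).le
  · have hle : 4 * t ^ 2 / (1 - t ^ 2) ≤ 5 / 6 := by
      rw [div_le_iff₀ h1t2]; nlinarith
    have h56 : Real.exp (5 / 6) < 5 / 2 := by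
      have h9 := Real.exp_one_lt_d9
      have hp : Real.exp (5 / 6) ^ 6 = Real.exp 1 ^ 5 := by
        rw [← Real.exp_nat_mul, ← Real.exp_nat_mul]; norm_num
      have hlt : Real.exp (5 / 6) ^ 6 < (5 / 2 : ℝ) ^ 6 := by
        rw [hp]
        calc Real.exp 1 ^ 5 < 2.7182818286 ^ 5 :=
              pow_lt_pow_left₀ h9 (Real.exp_pos 1).le (by norm_num)
          _ < (5 / 2 : ℝ) ^ 6 := by norm_num
      exact lt_of_pow_lt_pow_left₀ 6 (by norm_num) hlt
    exact lt_of_le_of_lt (Real.exp_le_exp.mpr hle) h56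
end

section
/- If u = ((a₀ + b₀√2) + i(a₁ + b₁√2))/√2^κ with a₀,b₀,a₁,b₁ ∈ ℤ, κ ∈ ℕ, and |u|² ≤ ε with 2^κ ε ≤ 1/4, then |a_j + b_j √2| ≤ 1/2 for j = 0,1, and consequently a_j is uniquely determined by b_j, namely a_j is the nearest integer to −b_j√2. -/
/-- Helper: if `a` is an integer with `|a + b√2| ≤ 1/2`, then `a = round (-b√2)`. -/
lemma round_aux (a b : ℤ) (h : |(a : ℝ) + (b : ℝ) * Real.sqrt 2| ≤ 1 / 2) :
    a = round (-(b : ℝ) * Real.sqrt 2) := by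
  rcases eq_or_ne b 0 with rfl | hb
  · simp only [Int.cast_zero, zero_mul, add_zero, neg_zero] at h ⊢
    have h1 : |(a : ℝ)| < 1 := lt_of_le_of_lt h (by norm_num)
    rw [← Int.cast_abs] at h1
    have h2 : |a| < 1 := by exact_mod_cast h1
    have ha : a = 0 := by rw [abs_lt] at h2; omega
    simp [ha]
  · -- strict inequality: a + b√2 ≠ ±1/2 since √2 irrational
    have hirr := irrational_sqrt_two
    have hne : ∀ q : ℚ, (a : ℝ) + (b : ℝ) * Real.sqrt 2 ≠ (q : ℝ) := by
      intro q hq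
      apply hirr.ne_rat ((q - a) / b)
      have hb' : (b : ℝ) ≠ 0 := Int.cast_ne_zero.mpr hb
      push_cast
      field_simp
      linarith [hq]
    have h1 : (a : ℝ) + (b : ℝ) * Real.sqrt 2 ≠ 1 / 2 := by
      have := hne (1 / 2); push_cast at this; simpa using this
    have h2 : (a : ℝ) + (b : ℝ) * Real.sqrt 2 ≠ -(1 / 2) := by
      have := hne (-(1 / 2)); push_cast at this; simpa using this
    have habs := abs_le.mp h
    have hlt1 : (a : ℝ) + (b : ℝ) * Real.sqrt 2 < 1 / 2 := lt_of_le_of_ne habs.2 h1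
    have hlt2 : -(1 / 2 : ℝ) < (a : ℝ) + (b : ℝ) * Real.sqrt 2 := lt_of_le_of_ne habs.1 (Ne.symm h2)
    rw [round_eq]
    symm
    rw [Int.floor_eq_iff]
    constructor <;> push_cast <;> linarith

/-- if u = ((a₀+b₀√2) + i(a₁+b₁√2))/√2^κ and |u|² ≤ ε with 2^κ ε ≤ 1/4,
then |a_j + b_j√2| ≤ 1/2 for j = 0,1, and a_j is the nearest integer to −b_j√2. -/
theorem mantissa_search_constraint (a₀ b₀ a₁ b₁ : ℤ) (κ : ℕ) (ε : ℝ) (hε : 0 < ε)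
    (hκε : 2 ^ κ * ε ≤ 1 / 4)
    (hu : ‖(
        (((a₀ : ℝ) + (b₀ : ℝ) * Real.sqrt 2 : ℝ) : ℂ)
            + Complex.I * (((a₁ : ℝ) + (b₁ : ℝ) * Real.sqrt 2 : ℝ) : ℂ))‖ ^ 2 / (2 : ℝ) ^ κ ≤ ε) :
    |(a₀ : ℝ) + (b₀ : ℝ) * Real.sqrt 2| ≤ 1 / 2 ∧
    |(a₁ : ℝ) + (b₁ : ℝ) * Real.sqrt 2| ≤ 1 / 2 ∧
    a₀ = round (-(b₀ : ℝ) * Real.sqrt 2) ∧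
    a₁ = round (-(b₁ : ℝ) * Real.sqrt 2) := by
  set x₀ : ℝ := (a₀ : ℝ) + (b₀ : ℝ) * Real.sqrt 2 with hx₀
  set x₁ : ℝ := (a₁ : ℝ) + (b₁ : ℝ) * Real.sqrt 2 with hx₁
  have hpow : (0 : ℝ) < 2 ^ κ := by positivity
  have habs2 : ‖(x₀ : ℂ) + Complex.I * (x₁ : ℂ)‖ ^ 2 = x₀ ^ 2 + x₁ ^ 2 := by
    rw [Complex.sq_norm]
    have : (x₀ : ℂ) + Complex.I * (x₁ : ℂ) = (x₀ : ℂ) + (x₁ : ℂ) * Complex.I := by ring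
    rw [this, Complex.normSq_add_mul_I]
  have hsum : x₀ ^ 2 + x₁ ^ 2 ≤ 2 ^ κ * ε := by
    rw [← habs2]
    calc ‖(x₀ : ℂ) + Complex.I * (x₁ : ℂ)‖ ^ 2
        = ‖(x₀ : ℂ) + Complex.I * (x₁ : ℂ)‖ ^ 2 / 2 ^ κ * 2 ^ κ := by
          field_simp
      _ ≤ ε * 2 ^ κ := by
          exact mul_le_mul_of_nonneg_right hu hpow.le
      _ = 2 ^ κ * ε := mul_comm _ _
  have hq : x₀ ^ 2 + x₁ ^ 2 ≤ 1 / 4 := hsum.trans hκε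
  have h0 : |x₀| ≤ 1 / 2 := by
    rw [abs_le]; constructor <;> nlinarith [sq_nonneg x₀, sq_nonneg x₁]
  have h1 : |x₁| ≤ 1 / 2 := by
    rw [abs_le]; constructor <;> nlinarith [sq_nonneg x₀, sq_nonneg x₁]
  exact ⟨h0, h1, round_aux a₀ b₀ h0, round_aux a₁ b₁ h1⟩
end

section
/- If u is an entry of some 2×2 unitary matrix with all entries in ℤ[i,1/√2], written u = (a + bω + cω² + dω³)/√2^κ with a,b,c,d ∈ ℤ and κ = ⌈m/2⌉, then a² + b² + c² + d² ≤ 2^{⌈m/2⌉}. -/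
open Complex Matrix

/-- ω = e^{iπ/4}. -/
noncomputable def ω8 : ℂ := Complex.exp (Complex.I * (Real.pi / 4))

/-- Membership in the ring ℤ[i,1/√2]: z = (a+bω+cω²+dω³)/√2^κ for integers a,b,c,d and κ ∈ ℕ. -/
def InRingZW (z : ℂ) : Prop :=
  ∃ (a b c d : ℤ) (κ : ℕ),
    z = ((a : ℂ) + (b : ℂ) * ω8 + (c : ℂ) * ω8 ^ 2 + (d : ℂ) * ω8 ^ 3) /
      (Real.sqrt 2 : ℂ) ^ κ

lemma omega_eq : ω8 = ((Real.sqrt 2 / 2 : ℝ) : ℂ) * (1 + Complex.I) := by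
  rw [ω8, mul_comm, Complex.exp_mul_I]
  rw [show (↑Real.pi / 4 : ℂ) = ((Real.pi/4 : ℝ) : ℂ) by push_cast; ring]
  rw [← Complex.ofReal_cos, ← Complex.ofReal_sin]
  rw [Real.cos_pi_div_four, Real.sin_pi_div_four]
  ring

lemma normSq_rep (a b c d : ℤ) :
    Complex.normSq ((a:ℂ) + (b:ℂ)*ω8 + (c:ℂ)*ω8^2 + (d:ℂ)*ω8^3)
      = ((a^2+b^2+c^2+d^2 : ℤ) : ℝ) + ((a*b+b*c+c*d-d*a : ℤ):ℝ) * Real.sqrt 2 := by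
  have hs : (Real.sqrt 2) ^ 2 = 2 := Real.sq_sqrt (by norm_num)
  set s := Real.sqrt 2 with hsdef
  rw [omega_eq]
  simp only [Complex.normSq_apply, Complex.add_re, Complex.add_im, Complex.mul_re,
    Complex.mul_im, Complex.ofReal_re, Complex.ofReal_im, Complex.one_re, Complex.one_im,
    Complex.I_re, Complex.I_im, Complex.intCast_re, Complex.intCast_im, pow_succ, pow_zero,
    one_mul, mul_one, mul_zero, zero_mul, sub_zero, zero_sub, add_zero, zero_add]
  push_cast
  linear_combination ((b:ℝ)^2/2 + (c:ℝ)^2*(s^2+2)/4 + (d:ℝ)^2*(s^4+2*s^2+4)/8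
    + s*(-(a:ℝ)*d/2 + (b:ℝ)*c/2 + (c:ℝ)*d*(s^2+2)/4)) * hs

lemma normSq_pow (κ : ℕ) : Complex.normSq ((Real.sqrt 2 : ℂ) ^ κ) = 2 ^ κ := by
  rw [show ((Real.sqrt 2 : ℝ) : ℂ) ^ κ = (((Real.sqrt 2)^κ : ℝ) : ℂ) by push_cast; ring]
  rw [Complex.normSq_ofReal, ← mul_pow, Real.mul_self_sqrt (by norm_num)]

lemma key (u v : ℂ) (hsum : Complex.normSq u + Complex.normSq v = 1)
    (a b c d : ℤ) (κ : ℕ)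
    (hu : u = ((a : ℂ) + (b : ℂ) * ω8 + (c : ℂ) * ω8 ^ 2 + (d : ℂ) * ω8 ^ 3) /
      (Real.sqrt 2 : ℂ) ^ κ)
    (hv : InRingZW v) :
    a ^ 2 + b ^ 2 + c ^ 2 + d ^ 2 ≤ 2 ^ κ := by
  obtain ⟨a', b', c', d', lam, hv⟩ := hv
  have hu2 : Complex.normSq u
      = (((a^2+b^2+c^2+d^2 : ℤ):ℝ) + ((a*b+b*c+c*d-d*a : ℤ):ℝ) * Real.sqrt 2) / 2 ^ κ := by
    rw [hu, Complex.normSq_div, normSq_rep, normSq_pow]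
  have hv2 : Complex.normSq v
      = (((a'^2+b'^2+c'^2+d'^2 : ℤ):ℝ)
          + ((a'*b'+b'*c'+c'*d'-d'*a' : ℤ):ℝ) * Real.sqrt 2) / 2 ^ lam := by
    rw [hv, Complex.normSq_div, normSq_rep, normSq_pow]
  rw [hu2, hv2] at hsum
  have hmain : ((2^lam * (a^2+b^2+c^2+d^2) + 2^κ * (a'^2+b'^2+c'^2+d'^2)
        - 2^(κ+lam) : ℤ) : ℝ)
      + ((2^lam * (a*b+b*c+c*d-d*a) + 2^κ * (a'*b'+b'*c'+c'*d'-d'*a') : ℤ) : ℝ)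
        * Real.sqrt 2 = 0 := by
    have h2K : (2:ℝ)^κ ≠ 0 := by positivity
    have h2L : (2:ℝ)^lam ≠ 0 := by positivity
    field_simp at hsum
    push_cast [pow_add] at hsum ⊢
    linear_combination hsum
  have hq0 : (2^lam * (a*b+b*c+c*d-d*a) + 2^κ * (a'*b'+b'*c'+c'*d'-d'*a') : ℤ) = 0 := by
    by_contra hq
    refine (((irrational_sqrt_two.intCast_mul hq).add_intCast
      (2^lam * (a^2+b^2+c^2+d^2) + 2^κ * (a'^2+b'^2+c'^2+d'^2) - 2^(κ+lam))).ne_int 0) ?_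
    push_cast at hmain ⊢
    linarith
  have hp0 : (2^lam * (a^2+b^2+c^2+d^2) + 2^κ * (a'^2+b'^2+c'^2+d'^2)
      - 2^(κ+lam) : ℤ) = 0 := by
    have h0 : ((2^lam * (a^2+b^2+c^2+d^2) + 2^κ * (a'^2+b'^2+c'^2+d'^2)
        - 2^(κ+lam) : ℤ) : ℝ) = 0 := by
      rw [hq0] at hmain; push_cast at hmain ⊢; linarith
    exact_mod_cast h0
  have hA' : (0:ℤ) ≤ a'^2+b'^2+c'^2+d'^2 := by positivity
  have h2k : (0:ℤ) < 2^κ := pow_pos (by norm_num) κ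
  have h2l : (0:ℤ) < 2^lam := pow_pos (by norm_num) lam
  have hle : 2^lam * (a^2+b^2+c^2+d^2) ≤ 2^lam * 2^κ := by
    rw [pow_add, mul_comm ((2:ℤ)^κ)] at hp0
    nlinarith
  exact le_of_mul_le_mul_left hle h2l

/-- if u is an entry of a 2×2 unitary with all entries in ℤ[i,1/√2], written
u = (a+bω+cω²+dω³)/√2^⌈m/2⌉, then a² + b² + c² + d² ≤ 2^⌈m/2⌉. -/
theorem unitary_entry_bound (U : Matrix (Fin 2) (Fin 2) ℂ)
    (hU : U ∈ Matrix.unitaryGroup (Fin 2) ℂ)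
    (hring : ∀ i j : Fin 2, InRingZW (U i j))
    (i j : Fin 2) (a b c d : ℤ) (m : ℕ)
    (hu : U i j = ((a : ℂ) + (b : ℂ) * ω8 + (c : ℂ) * ω8 ^ 2 + (d : ℂ) * ω8 ^ 3) /
      (Real.sqrt 2 : ℂ) ^ ((m + 1) / 2)) :
    a ^ 2 + b ^ 2 + c ^ 2 + d ^ 2 ≤ 2 ^ ((m + 1) / 2) := by
  have h1 : U * star U = 1 := Matrix.mem_unitaryGroup_iff.mp hU
  have h2 : Complex.normSq (U i 0) + Complex.normSq (U i 1) = 1 := by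
    have h := congrFun (congrFun h1 i) i
    rw [Matrix.mul_apply, Fin.sum_univ_two] at h
    simp only [Matrix.star_apply, Matrix.one_apply_eq, RCLike.star_def] at h
    rw [Complex.mul_conj, Complex.mul_conj] at h
    exact_mod_cast h
  fin_cases j
  · exact key (U i 0) (U i 1) h2 a b c d _ hu (hring i 1)
  · exact key (U i 1) (U i 0) (by linarith) a b c d _ hu (hring i 0)
end
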